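/- The polynomial D(z) = (1-z)^6 - (45/8)(1-z)^3 z^2 + (3915/2048) z^4 has strictly negative derivative on (0, 1/4], hence attains its minimum on [0,1/4] at z = 1/4. -/

import Mathlib

open Set

lemma deriv_D (z : ℝ) :
    deriv (fun z : ℝ =>
      (1 - z) ^ 6 - 45 / 8 * (1 - z) ^ 3 * z ^ 2 + 3915 / 2048 * z ^ 4) z =
    -6 * (1 - z) ^ 5 - 45 / 8 * (-3 * (1 - z) ^ 2 * z ^ 2 + (1 - z) ^ 3 * (2 * z))
      + 3915 / 512 * z ^ 3 := by
  have h : HasDerivAt (fun z : ℝ =>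
      (1 - z) ^ 6 - 45 / 8 * (1 - z) ^ 3 * z ^ 2 + 3915 / 2048 * z ^ 4)
      (-6 * (1 - z) ^ 5 - 45 / 8 * (-3 * (1 - z) ^ 2 * z ^ 2 + (1 - z) ^ 3 * (2 * z))
        + 3915 / 512 * z ^ 3) z := by
    have h1 : HasDerivAt (fun z : ℝ => 1 - z) (-1) z := by
      exact ((hasDerivAt_id z).const_sub (1:ℝ))
    have h2 : HasDerivAt (fun z : ℝ => (1 - z) ^ 6) (-6 * (1 - z) ^ 5) z := by
      have := h1.fun_pow 6; exact this.congr_deriv (by ring)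
    have h3 : HasDerivAt (fun z : ℝ => (1 - z) ^ 3) (-3 * (1 - z) ^ 2) z := by
      have := h1.fun_pow 3; exact this.congr_deriv (by ring)
    have h4 : HasDerivAt (fun z : ℝ => z ^ 2) (2 * z) z := by
      simpa using hasDerivAt_pow 2 z
    have h5 : HasDerivAt (fun z : ℝ => (1 - z) ^ 3 * z ^ 2)
        (-3 * (1 - z) ^ 2 * z ^ 2 + (1 - z) ^ 3 * (2 * z)) z := h3.mul h4
    have h6 : HasDerivAt (fun z : ℝ => z ^ 4) (4 * z ^ 3) z := by
      simpa using hasDerivAt_pow 4 z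
    have := (h2.fun_sub (h5.const_mul (45/8 : ℝ))).fun_add (h6.const_mul (3915/2048 : ℝ))
    exact (this.congr_deriv (by ring)).congr_of_eventuallyEq
      (Filter.Eventually.of_forall fun x => by ring)
  exact h.deriv

theorem stmt_14 :
    (∀ z ∈ Ioc (0 : ℝ) (1 / 4),
        deriv (fun z : ℝ =>
          (1 - z) ^ 6 - 45 / 8 * (1 - z) ^ 3 * z ^ 2 + 3915 / 2048 * z ^ 4) z < 0) ∧
      ∀ z ∈ Icc (0 : ℝ) (1 / 4),
        (1 - (1 / 4 : ℝ)) ^ 6 - 45 / 8 * (1 - (1 / 4 : ℝ)) ^ 3 * (1 / 4 : ℝ) ^ 2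
            + 3915 / 2048 * (1 / 4 : ℝ) ^ 4 ≤
          (1 - z) ^ 6 - 45 / 8 * (1 - z) ^ 3 * z ^ 2 + 3915 / 2048 * z ^ 4 := by
  constructor
  · intro z hz
    obtain ⟨h0, h1⟩ := hz
    rw [deriv_D]
    nlinarith [sq_nonneg z, sq_nonneg (1 - z), sq_nonneg (z - 1/4), sq_nonneg (z^2 - z),
      mul_pos h0 h0, pow_pos h0 3, sq_nonneg (z^2 - 1/4)]
  · intro z hz
    obtain ⟨h0, h1⟩ := hz
    nlinarith [sq_nonneg (z - 1/4), sq_nonneg z, sq_nonneg (1 - z), mul_nonneg h0 h0,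
      sq_nonneg (z^2 - 1/16), mul_nonneg (mul_nonneg h0 h0) h0,
      mul_nonneg (sq_nonneg (z - 1/4)) h0, mul_nonneg (sq_nonneg (z - 1/4)) (sq_nonneg z)]
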